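/- For integers k = k(n), w = w(n) with k ≥ 2, w ≥ 64, and 2kw(2w + ⌈log₂ k⌉ + ⌈log₂(2w)⌉) < n, the class of Boolean functions on n variables computable by k-OBDDs of width ⌊w/16⌋ − 3 is strictly contained in the class computable by k-OBDDs of width w. -/

import Mathlib

/-- A `k`-OBDD of width `w` over `n` Boolean variables: `k` layers, each an OBDD
(oblivious read-once leveled program) reading the variables in the common order
`ord`, with at most `w` nodes per level (levels are modeled by state sets `Fin w`,
with transition `δ`, a start node and an acceptance labeling of the final level). -/
structure KOBDD (n k w : ℕ) where
  ord : Equiv.Perm (Fin n)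
  δ : Fin k → Fin n → Fin w → Bool → Fin w
  start : Fin w
  accept : Fin w → Bool

/-- Run one layer `l` of the program from state `s` on input `x`: the variables are
read in the order given by `ord`. -/
def KOBDD.runLayer {n k w : ℕ} (P : KOBDD n k w) (x : Fin n → Bool)
    (l : Fin k) (s : Fin w) : Fin w :=
  (List.finRange n).foldl (fun t j => P.δ l j t (x (P.ord j))) s

/-- Run the whole program on input `x`. -/
def KOBDD.run {n k w : ℕ} (P : KOBDD n k w) (x : Fin n → Bool) : Fin w :=
  (List.finRange k).foldl (fun s l => P.runLayer x l s) P.start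

/-- The program `P` computes the Boolean function `f`. -/
def KOBDD.computes {n k w : ℕ} (P : KOBDD n k w) (f : (Fin n → Bool) → Bool) : Prop :=
  ∀ x, f x = P.accept (P.run x)

/-- `N^π(f)` for the prefix-partition `π` agreeing with the order `θ` whose first part
consists of the first `u` variables in the order: the number of distinct subfunctions
obtained by fixing those variables. -/
noncomputable def numSubfunctions (n : ℕ) (f : (Fin n → Bool) → Bool)
    (θ : Equiv.Perm (Fin n)) (u : ℕ) : ℕ :=
  Set.ncard {g : (Fin n → Bool) → Bool |
    ∃ ρ : Fin n → Bool,
      g = fun y => f (fun i => if (θ.symm i : ℕ) < u then ρ i else y i)}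

/-- `N^θ(f)`: the maximum of `N^π(f)` over prefix-partitions `π` agreeing with `θ`. -/
noncomputable def NOrd (n : ℕ) (f : (Fin n → Bool) → Bool)
    (θ : Equiv.Perm (Fin n)) : ℕ :=
  (Finset.Ico 1 n).sup (numSubfunctions n f θ)

/-- `N(f)`: the minimum of `N^θ(f)` over all orders `θ`. -/
noncomputable def Nsub (n : ℕ) (f : (Fin n → Bool) → Bool) : ℕ :=
  Finset.univ.inf' Finset.univ_nonempty (NOrd n f)

namespace St10

/-- fold of `f` over the interval `[a, a+len)`, applied left to right. -/
def segFold {α : Type*} (f : ℕ → α → α) : ℕ → ℕ → α → α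
  | _, 0, x => x
  | a, len+1, x => segFold f (a+1) len (f a x)

theorem segFold_zero {α : Type*} (f : ℕ → α → α) (a : ℕ) (x : α) :
    segFold f a 0 x = x := rfl

theorem segFold_succ {α : Type*} (f : ℕ → α → α) (a len : ℕ) (x : α) :
    segFold f a (len+1) x = segFold f (a+1) len (f a x) := rfl

theorem segFold_add {α : Type*} (f : ℕ → α → α) (l1 l2 : ℕ) :
    ∀ (a : ℕ) (x : α),
    segFold f a (l1 + l2) x = segFold f (a + l1) l2 (segFold f a l1 x) := by
  induction l1 with
  | zero => intro a x; simp [segFold_zero]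
  | succ m ih =>
      intro a x
      have : m + 1 + l2 = (m + l2) + 1 := by omega
      rw [this, segFold_succ, segFold_succ, ih]
      ring_nf

theorem segFold_succ_last {α : Type*} (f : ℕ → α → α) (a len : ℕ) (x : α) :
    segFold f a (len+1) x = f (a+len) (segFold f a len x) := by
  have := segFold_add f len 1 a x
  simpa [segFold_succ, segFold_zero] using this

theorem segFold_congr {α : Type*} {f g : ℕ → α → α} :
    ∀ {a len : ℕ}, (∀ j, a ≤ j → j < a + len → f j = g j) →
      ∀ (x : α), segFold f a len x = segFold g a len x := by
  intro a len
  induction len generalizing a with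
  | zero => intro _ x; rfl
  | succ m ih =>
      intro h x
      rw [segFold_succ, segFold_succ, h a le_rfl (by omega)]
      exact ih (fun j hj hj' => h j (by omega) (by omega)) _

theorem segFold_id {α : Type*} {f : ℕ → α → α} {a len : ℕ}
    (h : ∀ j, a ≤ j → j < a + len → ∀ x, f j x = x) (x : α) :
    segFold f a len x = x := by
  induction len generalizing a x with
  | zero => rfl
  | succ m ih =>
      rw [segFold_succ, h a le_rfl (by omega)]
      exact ih (fun j hj hj' y => h j (by omega) (by omega) y) _

/-- relate a fold over `List.range n` to `segFold`. -/
theorem foldl_range_eq_segFold {α : Type*} (f : ℕ → α → α) (n : ℕ) (x : α) :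
    (List.range n).foldl (fun t j => f j t) x = segFold f 0 n x := by
  induction n with
  | zero => rfl
  | succ m ih =>
      rw [List.range_succ, List.foldl_append, segFold_succ_last, ih]
      simp

/-- `runLayer` as a `segFold` over slot indices. -/
theorem runLayer_eq_segFold {n k w : ℕ} (P : KOBDD n k w) (x : Fin n → Bool)
    (l : Fin k) (s : Fin w) :
    P.runLayer x l s =
      segFold (fun j t => if h : j < n then P.δ l ⟨j, h⟩ t (x (P.ord ⟨j, h⟩)) else t)
        0 n s := by
  rw [KOBDD.runLayer, ← foldl_range_eq_segFold, ← (show (List.finRange n).map (fun i : Fin n => (i : ℕ)) = List.range n from List.ext_getElem (by simp) (by simp)), List.foldl_map]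
  congr 1
  funext t j
  simp

theorem run_eq_segFold {n k w : ℕ} (P : KOBDD n k w) (x : Fin n → Bool) :
    P.run x =
      segFold (fun l s => if h : l < k then P.runLayer x ⟨l, h⟩ s else s) 0 k P.start := by
  rw [KOBDD.run, ← foldl_range_eq_segFold, ← (show (List.finRange k).map (fun i : Fin k => (i : ℕ)) = List.range k from List.ext_getElem (by simp) (by simp)), List.foldl_map]
  congr 1
  funext t j
  simp

end St10

-- simulation: smaller width embeds into larger width
namespace St10

def embed {n k w w' : ℕ} (h : w' ≤ w) (P : KOBDD n k w') : KOBDD n k w where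
  ord := P.ord
  δ := fun l j s b => if hs : (s : ℕ) < w' then Fin.castLE h (P.δ l j ⟨s, hs⟩ b) else s
  start := Fin.castLE h P.start
  accept := fun s => if hs : (s : ℕ) < w' then P.accept ⟨s, hs⟩ else false

theorem embed_runLayer {n k w w' : ℕ} (h : w' ≤ w) (P : KOBDD n k w')
    (x : Fin n → Bool) (l : Fin k) (s : Fin w') :
    (embed h P).runLayer x l (Fin.castLE h s) = Fin.castLE h (P.runLayer x l s) := by
  unfold KOBDD.runLayer
  refine List.foldl_hom (Fin.castLE h) ?_
  intro t j
  simp [embed, Fin.castLE]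

theorem embed_run {n k w w' : ℕ} (h : w' ≤ w) (P : KOBDD n k w') (x : Fin n → Bool) :
    (embed h P).run x = Fin.castLE h (P.run x) := by
  unfold KOBDD.run
  refine List.foldl_hom (Fin.castLE h) ?_
  intro t j
  exact embed_runLayer h P x j t

theorem embed_computes {n k w w' : ℕ} (h : w' ≤ w) (P : KOBDD n k w')
    {f : (Fin n → Bool) → Bool} (hf : P.computes f) : (embed h P).computes f := by
  intro x
  rw [hf x, embed_run]
  simp [embed, Fin.castLE]

theorem small_subset_big {n k w w' : ℕ} (h : w' ≤ w) :
    {f : (Fin n → Bool) → Bool | ∃ P : KOBDD n k w', P.computes f}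
      ⊆ {f : (Fin n → Bool) → Bool | ∃ P : KOBDD n k w, P.computes f} := by
  rintro f ⟨P, hP⟩
  exact ⟨embed h P, embed_computes h P hP⟩

end St10
-- The family of hard functions
namespace St10

def Vv (w : ℕ) : ℕ := w / 2
def mmv (k w : ℕ) : ℕ := 4 * k * w * w
def Sv (k w : ℕ) : ℕ := mmv k w - 2 * (k * Vv w)

/-- index type of the family -/
def Idx (k w : ℕ) := Fin k → Fin (Sv k w) → Fin (Vv w) → Fin (Vv w)

instance (k w : ℕ) : Fintype (Idx k w) := by unfold Idx; infer_instance
instance (k w : ℕ) : DecidableEq (Idx k w) := by unfold Idx; infer_instance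

def famAct {k w : ℕ} (A : Idx k w) (l : Fin k) (j : ℕ) (s : Fin w) : Fin w :=
  if j < k * Vv w then
    -- steer zone: per-layer +1 shift mod V
    if h : j / Vv w = (l : ℕ) ∧ (s : ℕ) < Vv w then
      ⟨((s : ℕ) + 1) % Vv w, by
        have h0 : 0 < Vv w := Nat.lt_of_le_of_lt (Nat.zero_le _) h.2
        exact lt_of_lt_of_le (Nat.mod_lt _ h0) (Nat.div_le_self w 2)⟩
    else s
  else if j < k * Vv w + Sv k w then
    -- table zone: apply the table of this layer and slot
    if h : (s : ℕ) < Vv w ∧ j - k * Vv w < Sv k w then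
      Fin.castLE (Nat.div_le_self w 2) (A l ⟨j - k * Vv w, h.2⟩ ⟨s, h.1⟩)
    else s
  else if j < k * Vv w + Sv k w + k * Vv w then
    -- cross zone: send the compared value of this layer to V
    if h : (j - (k * Vv w + Sv k w)) / Vv w = (l : ℕ) ∧
        (s : ℕ) = (j - (k * Vv w + Sv k w)) % Vv w ∧ Vv w < w then
      ⟨Vv w, h.2.2⟩
    else s
  else s

def famδ {k w : ℕ} (A : Idx k w) (l : Fin k) (j : ℕ) (s : Fin w) (b : Bool) : Fin w :=
  if b then famAct A l j s else s

def famP (n k w : ℕ) (hw0 : 0 < w) (A : Idx k w) : KOBDD n k w where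
  ord := Equiv.refl _
  δ := fun l j s b => famδ A l (j : ℕ) s b
  start := ⟨0, hw0⟩
  accept := fun s => decide ((s : ℕ) = Vv w)

def famFun (n k w : ℕ) (hw0 : 0 < w) (A : Idx k w) : (Fin n → Bool) → Bool :=
  fun x => (famP n k w hw0 A).accept ((famP n k w hw0 A).run x)

end St10
namespace St10

/-- cyclic shift by `c` inside `[0, V)`. -/
def shiftV {w : ℕ} (c : ℕ) (s : Fin w) : Fin w :=
  if h : (s : ℕ) < Vv w then
    ⟨((s : ℕ) + c) % Vv w, by
      have h0 : 0 < Vv w := Nat.lt_of_le_of_lt (Nat.zero_le _) h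
      exact lt_of_lt_of_le (Nat.mod_lt _ h0) (Nat.div_le_self w 2)⟩
  else s

theorem shiftV_shiftV {w : ℕ} (c : ℕ) (s : Fin w) :
    shiftV 1 (shiftV c s) = shiftV (c + 1) s := by
  unfold shiftV
  by_cases h : (s : ℕ) < Vv w
  · have h0 : 0 < Vv w := Nat.lt_of_le_of_lt (Nat.zero_le _) h
    rw [dif_pos h]
    have h2 : (((s : ℕ) + c) % Vv w) < Vv w := Nat.mod_lt _ h0
    rw [dif_pos h2, dif_pos h]
    apply Fin.ext
    simp only
    rw [Nat.mod_add_mod]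
    ring_nf
  · rw [dif_neg h, dif_neg h, dif_neg h]

theorem shiftV_zero {w : ℕ} (s : Fin w) : shiftV 0 s = s := by
  unfold shiftV
  by_cases h : (s : ℕ) < Vv w
  · rw [dif_pos h]
    apply Fin.ext
    simp [Nat.mod_eq_of_lt h]
  · rw [dif_neg h]

theorem segFold_shift {w : ℕ} {f : ℕ → Fin w → Fin w} :
    ∀ {c a : ℕ}, (∀ j, a ≤ j → j < a + c → ∀ t : Fin w, f j t = shiftV 1 t) →
      ∀ (s : Fin w), segFold f a c s = shiftV c s := by
  intro c
  induction c with
  | zero => intro a _ s; rw [segFold_zero, shiftV_zero]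
  | succ m ih =>
      intro a h s
      rw [segFold_succ_last, ih (fun j hj hj' => h j hj (by omega)),
        h (a + m) (by omega) (by omega), shiftV_shiftV]

/-- table application map -/
def tblV {k w : ℕ} (A : Idx k w) (lam : Fin k) (q : Fin (Sv k w)) (s : Fin w) : Fin w :=
  if h : (s : ℕ) < Vv w then Fin.castLE (Nat.div_le_self w 2) (A lam q ⟨s, h⟩) else s

/-- crossing map -/
def crV {w : ℕ} (hVw : Vv w < w) (lstar v lam : ℕ) (s : Fin w) : Fin w :=
  if lam = lstar ∧ (s : ℕ) = v then ⟨Vv w, hVw⟩ else s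

/-- the steering map of a whole layer -/
def steerV {w : ℕ} (lstar c lam : ℕ) (s : Fin w) : Fin w :=
  if lam = lstar then shiftV c s else s

/-- the distinguishing input -/
def xplan (n k w : ℕ) (lstar : ℕ) (q : Fin (Sv k w)) (c v : ℕ) : Fin n → Bool :=
  fun j => decide ((lstar * Vv w ≤ (j : ℕ) ∧ (j : ℕ) < lstar * Vv w + c) ∨
    (j : ℕ) = k * Vv w + (q : ℕ) ∨
    (j : ℕ) = k * Vv w + Sv k w + lstar * Vv w + v)

end St10
namespace St10

section Eval

variable {n k w : ℕ}

theorem fam_runLayer (hw : 64 ≤ w) (hk : 2 ≤ k) (hmn : mmv k w ≤ n)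
    (hw0 : 0 < w) (hVw : Vv w < w)
    (A : Idx k w) (lstar : ℕ) (hls : lstar < k) (q : Fin (Sv k w)) (c v : ℕ)
    (hc : c < Vv w) (hv : v < Vv w) (lam : Fin k) (s : Fin w) :
    (famP n k w hw0 A).runLayer (xplan n k w lstar q c v) lam s =
      crV hVw lstar v (lam : ℕ) (tblV A lam q (steerV lstar c (lam : ℕ) s)) := by
  have hVpos : 0 < Vv w := by
    have : 32 ≤ Vv w := by
      have := Nat.div_le_div_right (c := 2) hw
      simpa [Vv] using this
    omega
  have hVle : Vv w ≤ w := Nat.div_le_self _ _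
  have hlsk : lstar + 1 ≤ k := hls
  have hlsV : (lstar + 1) * Vv w ≤ k * Vv w := Nat.mul_le_mul_right _ hlsk
  have hmulV : (lstar + 1) * Vv w = lstar * Vv w + Vv w := by ring
  have hlsVc : lstar * Vv w + c ≤ k * Vv w := by omega
  have hlsVv : lstar * Vv w + v < k * Vv w := by omega
  have hqS : (q : ℕ) < Sv k w := q.isLt
  have hzone : k * Vv w + Sv k w + k * Vv w = mmv k w := by
    have h1 : 2 * (k * Vv w) ≤ 2 * (k * w) :=
      Nat.mul_le_mul_left _ (Nat.mul_le_mul_left _ hVle)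
    have h2 : 2 * (k * w) ≤ 2 * (k * w) * (2 * w) :=
      Nat.le_mul_of_pos_right _ (by omega)
    have h3 : 2 * (k * w) * (2 * w) = 4 * k * w * w := by ring
    have hS : Sv k w = mmv k w - 2 * (k * Vv w) := rfl
    have hm : mmv k w = 4 * k * w * w := rfl
    omega
  set F : ℕ → Fin w → Fin w := fun j t =>
    if (lstar * Vv w ≤ j ∧ j < lstar * Vv w + c) ∨ j = k * Vv w + (q : ℕ) ∨
        j = k * Vv w + Sv k w + lstar * Vv w + v then famAct A lam j t else t with hF
  rw [runLayer_eq_segFold]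
  have key : segFold (fun j t => if h : j < n then
        (famP n k w hw0 A).δ lam ⟨j, h⟩ t
          ((xplan n k w lstar q c v) ((famP n k w hw0 A).ord ⟨j, h⟩)) else t) 0 n s
      = segFold F 0 n s := by
    apply segFold_congr
    intro j _ hj
    funext t
    rw [dif_pos (by omega : j < n)]
    simp only [famP, Equiv.refl_apply, famδ, xplan, hF]
    by_cases hx : (lstar * Vv w ≤ j ∧ j < lstar * Vv w + c) ∨ j = k * Vv w + (q : ℕ) ∨
        j = k * Vv w + Sv k w + lstar * Vv w + v
    · rw [if_pos hx]; exact if_pos (decide_eq_true hx)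
    · rw [if_neg hx]; exact if_neg (fun h => hx (of_decide_eq_true h))
  rw [key]
  have hn' : n = k * Vv w + (Sv k w + (k * Vv w + (n - mmv k w))) := by omega
  rw [hn', segFold_add, segFold_add, segFold_add]
  -- Zone 1 : steering
  have hZ1 : segFold F 0 (k * Vv w) s = steerV lstar c (lam : ℕ) s := by
    by_cases hlam : (lam : ℕ) = lstar
    · have hsplit : k * Vv w = lstar * Vv w + (c + (k * Vv w - lstar * Vv w - c)) := by omega
      rw [hsplit, segFold_add, segFold_add]
      have s1 : segFold F 0 (lstar * Vv w) s = s := by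
        apply segFold_id
        intro j _ hj t
        simp only [hF]
        exact if_neg (by push_neg; exact ⟨fun h1 => by omega, by omega, by omega⟩)
      have s2 : ∀ t, segFold F (0 + lstar * Vv w) c t = shiftV c t := by
        intro t
        apply segFold_shift
        intro j hj hj' t'
        simp only [hF]
        rw [if_pos (Or.inl ⟨by omega, by omega⟩)]
        have hdiv : j / Vv w = lstar := Nat.div_eq_of_lt_le (by omega) (by omega)
        unfold famAct
        rw [if_pos (by omega : j < k * Vv w)]
        unfold shiftV
        by_cases ht : (t' : ℕ) < Vv w
        · rw [dif_pos ⟨by rw [hdiv, hlam], ht⟩, dif_pos ht]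
        · rw [dif_neg (by simp [hdiv, hlam, ht]), dif_neg ht]
      have s3 : ∀ t, segFold F (0 + lstar * Vv w + c) (k * Vv w - lstar * Vv w - c) t = t := by
        intro t
        apply segFold_id
        intro j hj hj' t'
        simp only [hF]
        exact if_neg (by push_neg; exact ⟨fun h1 => by omega, by omega, by omega⟩)
      rw [s1, s2, s3, steerV, if_pos hlam]
    · rw [steerV, if_neg hlam]
      apply segFold_id
      intro j _ hj t
      simp only [hF]
      by_cases hx : (lstar * Vv w ≤ j ∧ j < lstar * Vv w + c) ∨ j = k * Vv w + (q : ℕ) ∨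
          j = k * Vv w + Sv k w + lstar * Vv w + v
      · rw [if_pos hx]
        have hrange : lstar * Vv w ≤ j ∧ j < lstar * Vv w + c := by
          rcases hx with h | h | h
          · exact h
          · omega
          · omega
        have hdiv : j / Vv w = lstar := Nat.div_eq_of_lt_le (by omega) (by omega)
        unfold famAct
        rw [if_pos (by omega : j < k * Vv w), dif_neg (by rintro ⟨h1, -⟩; rw [hdiv] at h1; exact hlam h1.symm)]
      · rw [if_neg hx]
  -- Zone 2 : table
  have hZ2 : ∀ t, segFold F (0 + k * Vv w) (Sv k w) t = tblV A lam q t := by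
    intro t
    have hsplit : Sv k w = (q : ℕ) + (1 + (Sv k w - (q : ℕ) - 1)) := by omega
    rw [hsplit, segFold_add, segFold_add]
    have s1 : segFold F (0 + k * Vv w) (q : ℕ) t = t := by
      apply segFold_id
      intro j hj hj' t'
      simp only [hF]
      exact if_neg (by push_neg; exact ⟨fun h1 => by omega, by omega, by omega⟩)
    have s2 : ∀ t', segFold F (0 + k * Vv w + (q : ℕ)) 1 t' = tblV A lam q t' := by
      intro t'
      rw [segFold_succ, segFold_zero]
      simp only [hF]
      rw [if_pos (Or.inr (Or.inl (by omega)))]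
      unfold famAct
      rw [if_neg (by omega : ¬ 0 + k * Vv w + (q : ℕ) < k * Vv w),
        if_pos (by omega : 0 + k * Vv w + (q : ℕ) < k * Vv w + Sv k w)]
      unfold tblV
      have hsub : 0 + k * Vv w + (q : ℕ) - k * Vv w < Sv k w := by omega
      have e1 : (⟨0 + k * Vv w + (q : ℕ) - k * Vv w, hsub⟩ : Fin (Sv k w)) = q :=
        Fin.ext (by simp)
      by_cases ht : (t' : ℕ) < Vv w
      · rw [dif_pos (⟨ht, hsub⟩ : (t' : ℕ) < Vv w ∧ 0 + k * Vv w + (q : ℕ) - k * Vv w < Sv k w),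
          dif_pos ht]
        exact congrArg (Fin.castLE _) (congrFun (congrArg (A lam) e1) ⟨(t' : ℕ), ht⟩)
      · rw [dif_neg (by simp [ht]), dif_neg ht]
    have s3 : ∀ t', segFold F (0 + k * Vv w + (q : ℕ) + 1) (Sv k w - (q : ℕ) - 1) t' = t' := by
      intro t'
      apply segFold_id
      intro j hj hj' t''
      simp only [hF]
      exact if_neg (by push_neg; exact ⟨fun h1 => by omega, by omega, by omega⟩)
    rw [s1, s2, s3]
  -- Zone 3 : cross
  have hZ3 : ∀ t, segFold F (0 + k * Vv w + Sv k w) (k * Vv w) t =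
      crV hVw lstar v (lam : ℕ) t := by
    intro t
    have hgen : ∀ a, a = 0 + k * Vv w + Sv k w →
        segFold F a (k * Vv w) t = crV hVw lstar v (lam : ℕ) t := by
      intro a ha
      have hsplit : k * Vv w = (lstar * Vv w + v) + (1 + (k * Vv w - lstar * Vv w - v - 1)) := by
        omega
      rw [hsplit, segFold_add, segFold_add]
      have s1 : segFold F a (lstar * Vv w + v) t = t := by
        apply segFold_id
        intro j hj hj' t'
        simp only [hF]
        exact if_neg (by push_neg; exact ⟨fun h1 => by omega, by omega, by omega⟩)
      have s2 : ∀ t', segFold F (a + (lstar * Vv w + v)) 1 t' =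
          crV hVw lstar v (lam : ℕ) t' := by
        intro t'
        rw [segFold_succ, segFold_zero]
        simp only [hF]
        rw [if_pos (Or.inr (Or.inr (by omega)))]
        unfold famAct
        rw [if_neg (by omega), if_neg (by omega), if_pos (by omega)]
        have ho : a + (lstar * Vv w + v) - (k * Vv w + Sv k w)
            = lstar * Vv w + v := by omega
        have hdiv : (lstar * Vv w + v) / Vv w = lstar := Nat.div_eq_of_lt_le (by omega) (by omega)
        have hmod : (lstar * Vv w + v) % Vv w = v := by
          rw [Nat.add_comm, Nat.add_mul_mod_self_right, Nat.mod_eq_of_lt hv]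
        simp only [ho, hdiv, hmod]
        unfold crV
        by_cases hcond : lstar = (lam : ℕ) ∧ (t' : ℕ) = v
        · rw [dif_pos ⟨hcond.1, hcond.2, hVw⟩, if_pos ⟨hcond.1.symm, hcond.2⟩]
        · rw [dif_neg (fun h => hcond ⟨h.1, h.2.1⟩),
            if_neg (fun h => hcond ⟨h.1.symm, h.2⟩)]
      have s3 : ∀ t', segFold F (a + (lstar * Vv w + v) + 1)
          (k * Vv w - lstar * Vv w - v - 1) t' = t' := by
        intro t'
        apply segFold_id
        intro j hj hj' t''
        simp only [hF]
        exact if_neg (by push_neg; exact ⟨fun h1 => by omega, by omega, by omega⟩)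
      rw [s1, s2, s3]
    exact hgen _ rfl
  -- Zone 4 : trailing identity
  have hZ4 : ∀ t, segFold F (0 + k * Vv w + Sv k w + k * Vv w) (n - mmv k w) t = t := by
    intro t
    apply segFold_id
    intro j hj hj' t'
    simp only [hF]
    by_cases hx : (lstar * Vv w ≤ j ∧ j < lstar * Vv w + c) ∨ j = k * Vv w + (q : ℕ) ∨
        j = k * Vv w + Sv k w + lstar * Vv w + v
    · rw [if_pos hx]
      unfold famAct
      rw [if_neg (by omega), if_neg (by omega), if_neg (by omega)]
    · rw [if_neg hx]
  rw [hZ1, hZ2, hZ3, hZ4]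

end Eval

end St10
namespace St10

theorem segFold_fix {α : Type*} {f : ℕ → α → α} {x : α} (h : ∀ j, f j x = x) :
    ∀ (a d : ℕ), segFold f a d x = x := by
  intro a d
  induction d generalizing a with
  | zero => rfl
  | succ m ih => rw [segFold_succ, h a]; exact ih _

theorem segFold_pred {α : Type*} {f : ℕ → α → α} {P : α → Prop} :
    ∀ (d a : ℕ), (∀ j x, a ≤ j → j < a + d → P x → P (f j x)) →
    ∀ (x : α), P x → P (segFold f a d x) := by
  intro d
  induction d with
  | zero => intro a _ x hx; exact hx
  | succ m ih =>
      intro a h x hx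
      rw [segFold_succ]
      exact ih _ (fun j y hj hj' hy => h j y (by omega) (by omega) hy) _
        (h a x le_rfl (by omega) hx)

/-- common trail through the first layers -/
def trailT {k w : ℕ} (hw0 : 0 < w) (A : Idx k w) (q : Fin (Sv k w)) : ℕ → Fin w
  | 0 => ⟨0, hw0⟩
  | lv+1 => if h : lv < k then tblV A ⟨lv, h⟩ q (trailT hw0 A q lv) else trailT hw0 A q lv

theorem trailT_lt {k w : ℕ} (hw0 : 0 < w) (hVpos : 0 < Vv w) (A : Idx k w)
    (q : Fin (Sv k w)) : ∀ lv, ((trailT hw0 A q lv : Fin w) : ℕ) < Vv w := by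
  intro lv
  induction lv with
  | zero => exact hVpos
  | succ m ih =>
      show ((if h : m < k then tblV A ⟨m, h⟩ q (trailT hw0 A q m)
        else trailT hw0 A q m : Fin w) : ℕ) < Vv w
      by_cases h : m < k
      · rw [dif_pos h]
        unfold tblV
        rw [dif_pos ih]
        exact (A ⟨m, h⟩ q _).isLt
      · rw [dif_neg h]; exact ih

theorem trailT_congr {k w : ℕ} (hw0 : 0 < w) (A B : Idx k w) (q : Fin (Sv k w))
    (lv : ℕ) (h : ∀ lv' (h' : lv' < k), lv' < lv → A ⟨lv', h'⟩ q = B ⟨lv', h'⟩ q) :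
    trailT hw0 A q lv = trailT hw0 B q lv := by
  induction lv with
  | zero => rfl
  | succ m ih =>
      show (if hm : m < k then tblV A ⟨m, hm⟩ q (trailT hw0 A q m) else trailT hw0 A q m)
        = (if hm : m < k then tblV B ⟨m, hm⟩ q (trailT hw0 B q m) else trailT hw0 B q m)
      have ihm := ih (fun lv' h' hlt => h lv' h' (by omega))
      by_cases hm : m < k
      · rw [dif_pos hm, dif_pos hm, ihm, tblV, tblV, h m hm (by omega)]
      · rw [dif_neg hm, dif_neg hm, ihm]

theorem famFun_inj {n k w : ℕ} (hw : 64 ≤ w) (hk : 2 ≤ k) (hmn : mmv k w ≤ n)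
    (hw0 : 0 < w) : Function.Injective (famFun n k w hw0) := by
  classical
  have hVpos : 0 < Vv w := by
    have : 32 ≤ Vv w := by
      have := Nat.div_le_div_right (c := 2) hw
      simpa [Vv] using this
    omega
  have hVw : Vv w < w := Nat.div_lt_self (by omega) (by omega)
  intro A B hAB
  by_contra hne
  obtain ⟨l0, hl0⟩ := Function.ne_iff.mp hne
  obtain ⟨q, hq⟩ := Function.ne_iff.mp hl0
  have hex : ∃ lv, ∃ h : lv < k, A ⟨lv, h⟩ q ≠ B ⟨lv, h⟩ q :=
    ⟨l0, l0.isLt, by simpa using hq⟩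
  set lstar := Nat.find hex with hlstar
  obtain ⟨hlsk, hASne⟩ := Nat.find_spec hex
  have hmin : ∀ lv' (h' : lv' < k), lv' < lstar → A ⟨lv', h'⟩ q = B ⟨lv', h'⟩ q := by
    intro lv' h' hlt
    by_contra hcon
    exact Nat.find_min hex hlt ⟨h', hcon⟩
  obtain ⟨s0, hs0⟩ := Function.ne_iff.mp hASne
  -- parameters of the plan
  set u : Fin w := trailT hw0 A q lstar with hu
  have huV : (u : ℕ) < Vv w := trailT_lt hw0 hVpos A q lstar
  set c : ℕ := ((s0 : ℕ) + Vv w - (u : ℕ)) % Vv w with hc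
  have hcV : c < Vv w := Nat.mod_lt _ hVpos
  set v : ℕ := (A ⟨lstar, hlsk⟩ q s0 : ℕ) with hv
  have hvV : v < Vv w := (A ⟨lstar, hlsk⟩ q s0).isLt
  set x : Fin n → Bool := xplan n k w lstar q c v with hx
  -- layer step functions
  set GA : ℕ → Fin w → Fin w := fun lv s => if h : lv < k then
    (famP n k w hw0 A).runLayer x ⟨lv, h⟩ s else s with hGA
  set GB : ℕ → Fin w → Fin w := fun lv s => if h : lv < k then
    (famP n k w hw0 B).runLayer x ⟨lv, h⟩ s else s with hGB
  have hstepA : ∀ lv (h : lv < k) (s : Fin w), GA lv s =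
      crV hVw lstar v lv (tblV A ⟨lv, h⟩ q (steerV lstar c lv s)) := by
    intro lv h s
    simp only [hGA]
    rw [dif_pos h, hx, fam_runLayer hw hk hmn hw0 hVw A lstar hlsk q c v hcV hvV]
  have hstepB : ∀ lv (h : lv < k) (s : Fin w), GB lv s =
      crV hVw lstar v lv (tblV B ⟨lv, h⟩ q (steerV lstar c lv s)) := by
    intro lv h s
    simp only [hGB]
    rw [dif_pos h, hx, fam_runLayer hw hk hmn hw0 hVw B lstar hlsk q c v hcV hvV]
  -- common prefix
  have hpre : ∀ d, d ≤ lstar →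
      segFold GA 0 d ⟨0, hw0⟩ = trailT hw0 A q d ∧
      segFold GB 0 d ⟨0, hw0⟩ = trailT hw0 A q d := by
    intro d
    induction d with
    | zero => intro _; exact ⟨rfl, rfl⟩
    | succ m ih =>
        intro hd
        have hmk : m < k := by omega
        have hml : m < lstar := by omega
        obtain ⟨ihA, ihB⟩ := ih (by omega)
        have hTm : ((trailT hw0 A q m : Fin w) : ℕ) < Vv w := trailT_lt hw0 hVpos A q m
        have hsteer : steerV lstar c m (trailT hw0 A q m) = trailT hw0 A q m := by
          rw [steerV, if_neg (by omega)]
        have hcr : ∀ t : Fin w, (t : ℕ) < Vv w → crV hVw lstar v m t = t := by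
          intro t ht
          rw [crV, if_neg (by rintro ⟨h1, -⟩; omega)]
        constructor
        · rw [segFold_succ_last, ihA, Nat.zero_add, hstepA m hmk, hsteer]
          have : trailT hw0 A q (m+1) = tblV A ⟨m, hmk⟩ q (trailT hw0 A q m) := by
            show (if h : m < k then tblV A ⟨m, h⟩ q (trailT hw0 A q m)
              else trailT hw0 A q m) = _
            rw [dif_pos hmk]
          rw [this]
          apply hcr
          rw [tblV, dif_pos hTm]
          exact (A ⟨m, hmk⟩ q _).isLt
        · rw [segFold_succ_last, ihB, Nat.zero_add, hstepB m hmk, hsteer]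
          have h1 : tblV B ⟨m, hmk⟩ q (trailT hw0 A q m)
              = tblV A ⟨m, hmk⟩ q (trailT hw0 A q m) := by
            rw [tblV, tblV, hmin m hmk hml]
          rw [h1]
          have : trailT hw0 A q (m+1) = tblV A ⟨m, hmk⟩ q (trailT hw0 A q m) := by
            show (if h : m < k then tblV A ⟨m, h⟩ q (trailT hw0 A q m)
              else trailT hw0 A q m) = _
            rw [dif_pos hmk]
          rw [this]
          apply hcr
          rw [tblV, dif_pos hTm]
          exact (A ⟨m, hmk⟩ q _).isLt
  -- the steering hits s0 at layer lstar
  have hsteer_star : steerV lstar c lstar u = (⟨(s0 : ℕ), lt_trans s0.isLt hVw⟩ : Fin w) := by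
    rw [steerV, if_pos rfl, shiftV, dif_pos huV]
    apply Fin.ext
    show ((u : ℕ) + c) % Vv w = (s0 : ℕ)
    rw [hc, Nat.add_comm ((u : ℕ)), Nat.mod_add_mod]
    have : (s0 : ℕ) + Vv w - (u : ℕ) + (u : ℕ) = (s0 : ℕ) + Vv w := by omega
    rw [this, Nat.add_mod_right, Nat.mod_eq_of_lt s0.isLt]
  -- state after layer lstar for A
  have hmidA : GA lstar u = ⟨Vv w, hVw⟩ := by
    rw [hstepA lstar hlsk, hsteer_star]
    have h1 : tblV A ⟨lstar, hlsk⟩ q ⟨(s0 : ℕ), lt_trans s0.isLt hVw⟩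
        = Fin.castLE (Nat.div_le_self w 2) (A ⟨lstar, hlsk⟩ q s0) := by
      rw [tblV, dif_pos s0.isLt]
    rw [h1, crV, if_pos ⟨rfl, rfl⟩]
  have hmidB : GB lstar u = Fin.castLE (Nat.div_le_self w 2) (B ⟨lstar, hlsk⟩ q s0) := by
    rw [hstepB lstar hlsk, hsteer_star]
    have h1 : tblV B ⟨lstar, hlsk⟩ q ⟨(s0 : ℕ), lt_trans s0.isLt hVw⟩
        = Fin.castLE (Nat.div_le_self w 2) (B ⟨lstar, hlsk⟩ q s0) := by
      rw [tblV, dif_pos s0.isLt]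
    rw [h1, crV, if_neg ?hmm]
    case hmm =>
      rintro ⟨-, h2⟩
      have : (B ⟨lstar, hlsk⟩ q s0 : ℕ) = (A ⟨lstar, hlsk⟩ q s0 : ℕ) := h2
      exact hs0 (Fin.ext this.symm)
  -- tail preservation
  have htailA : segFold GA (lstar + 1) (k - (lstar + 1)) (⟨Vv w, hVw⟩ : Fin w)
      = ⟨Vv w, hVw⟩ := by
    apply segFold_fix
    intro j
    by_cases h : j < k
    · rw [hstepA j h]
      have h1 : steerV lstar c j (⟨Vv w, hVw⟩ : Fin w) = ⟨Vv w, hVw⟩ := by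
        rw [steerV]
        by_cases hj : j = lstar
        · rw [if_pos hj, shiftV, dif_neg (by simp)]
        · rw [if_neg hj]
      have h2 : tblV A ⟨j, h⟩ q (⟨Vv w, hVw⟩ : Fin w) = ⟨Vv w, hVw⟩ := by
        rw [tblV, dif_neg (by simp)]
      rw [h1, h2, crV, if_neg (by rintro ⟨-, h3⟩; simp at h3; omega)]
    · simp only [hGA]; rw [dif_neg h]
  have htailB : ((segFold GB (lstar + 1) (k - (lstar + 1))
      (Fin.castLE (Nat.div_le_self w 2) (B ⟨lstar, hlsk⟩ q s0)) : Fin w) : ℕ) < Vv w := by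
    apply segFold_pred (P := fun t : Fin w => (t : ℕ) < Vv w)
    · intro j t hj _ ht
      have hjl : j ≠ lstar := by omega
      by_cases h : j < k
      · rw [hstepB j h]
        have h1 : ((steerV lstar c j t : Fin w) : ℕ) < Vv w := by
          rw [steerV, if_neg hjl]; exact ht
        have h2 : ((tblV B ⟨j, h⟩ q (steerV lstar c j t) : Fin w) : ℕ) < Vv w := by
          rw [tblV, dif_pos h1]
          exact (B ⟨j, h⟩ q _).isLt
        rw [crV, if_neg (by rintro ⟨h4, -⟩; exact hjl h4)]
        exact h2
      · simp only [hGB]; rw [dif_neg h]; exact ht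
    · exact (B ⟨lstar, hlsk⟩ q s0).isLt
  -- assemble the two runs
  have hsplitk : k = lstar + (1 + (k - (lstar + 1))) := by omega
  have hrunA : (famP n k w hw0 A).run x = ⟨Vv w, hVw⟩ := by
    have h0 : (famP n k w hw0 A).run x = segFold GA 0 k ⟨0, hw0⟩ := by
      rw [run_eq_segFold]
      apply segFold_congr
      intro j _ hj
      funext t
      simp only [hGA]
    rw [h0, hsplitk, segFold_add, segFold_add, Nat.zero_add,
      (hpre lstar le_rfl).1, segFold_succ, segFold_zero, ← hu, hmidA]
    exact htailA
  have hrunB : (((famP n k w hw0 B).run x : Fin w) : ℕ) < Vv w := by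
    have h0 : (famP n k w hw0 B).run x = segFold GB 0 k ⟨0, hw0⟩ := by
      rw [run_eq_segFold]
      apply segFold_congr
      intro j _ hj
      funext t
      simp only [hGB]
    rw [h0, hsplitk, segFold_add, segFold_add, Nat.zero_add,
      (hpre lstar le_rfl).2, segFold_succ, segFold_zero, ← hu, hmidB]
    exact htailB
  -- contradiction with famFun A = famFun B
  have hfa : famFun n k w hw0 A x = true := by
    unfold famFun
    rw [hrunA]
    simp [famP]
  have hfb : famFun n k w hw0 B x = false := by
    unfold famFun
    have hacc : (famP n k w hw0 B).accept ((famP n k w hw0 B).run x)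
        = decide ((((famP n k w hw0 B).run x : Fin w) : ℕ) = Vv w) := rfl
    rw [hacc]
    exact decide_eq_false (by omega)
  rw [hAB] at hfa
  rw [hfa] at hfb
  exact absurd hfb (by decide)

end St10
namespace St10

theorem zones_eq {k w : ℕ} (hw0 : 0 < w) :
    k * Vv w + Sv k w + k * Vv w = mmv k w := by
  have hVle : Vv w ≤ w := Nat.div_le_self _ _
  have h1 : 2 * (k * Vv w) ≤ 2 * (k * w) :=
    Nat.mul_le_mul_left _ (Nat.mul_le_mul_left _ hVle)
  have h2 : 2 * (k * w) ≤ 2 * (k * w) * (2 * w) :=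
    Nat.le_mul_of_pos_right _ (by omega)
  have h3 : 2 * (k * w) * (2 * w) = 4 * k * w * w := by ring
  have hS : Sv k w = mmv k w - 2 * (k * Vv w) := rfl
  have hm : mmv k w = 4 * k * w * w := rfl
  omega

theorem famδ_high {k w : ℕ} (hw0 : 0 < w) (A : Idx k w) (l : Fin k) (j : ℕ)
    (hj : mmv k w ≤ j) (t : Fin w) (b : Bool) : famδ A l j t b = t := by
  have hz := zones_eq (k := k) hw0
  unfold famδ famAct
  cases b with
  | false => simp
  | true =>
      simp only [if_true]
      rw [if_neg (by omega), if_neg (by omega), if_neg (by omega)]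

/-- `f` depends only on the first `m` variables -/
def DepOn (n m : ℕ) (f : (Fin n → Bool) → Bool) : Prop :=
  ∀ x y : Fin n → Bool, (∀ j : Fin n, (j : ℕ) < m → x j = y j) → f x = f y

theorem famFun_depOn {n k w : ℕ} (hw0 : 0 < w) (A : Idx k w) :
    DepOn n (mmv k w) (famFun n k w hw0 A) := by
  intro x y hxy
  unfold famFun
  have hrun : (famP n k w hw0 A).run x = (famP n k w hw0 A).run y := by
    rw [run_eq_segFold, run_eq_segFold]
    apply segFold_congr
    intro lv _ hlv
    funext t
    by_cases h : lv < k
    · rw [dif_pos h, dif_pos h]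
      rw [runLayer_eq_segFold, runLayer_eq_segFold]
      apply segFold_congr
      intro j _ hj
      funext t'
      by_cases hjn : j < n
      · rw [dif_pos hjn, dif_pos hjn]
        by_cases hjm : j < mmv k w
        · have : x ((famP n k w hw0 A).ord ⟨j, hjn⟩) = y ((famP n k w hw0 A).ord ⟨j, hjn⟩) := by
            have : (famP n k w hw0 A).ord ⟨j, hjn⟩ = ⟨j, hjn⟩ := rfl
            rw [this]
            exact hxy _ hjm
          rw [this]
        · show famδ A _ j t' _ = famδ A _ j t' _
          rw [famδ_high hw0 A _ j (by omega) t', famδ_high hw0 A _ j (by omega) t']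
      · rw [dif_neg hjn, dif_neg hjn]
    · rw [dif_neg h, dif_neg h]
  rw [hrun]

theorem famFun_mem_big {n k w : ℕ} (hw0 : 0 < w) (A : Idx k w) :
    ∃ P : KOBDD n k w, P.computes (famFun n k w hw0 A) :=
  ⟨famP n k w hw0 A, fun _ => rfl⟩

end St10
namespace St10

section Recon

variable {n k w' : ℕ}

/-- slot `j` reads one of the first `m` variables -/
def relP (P : KOBDD n k w') (m : ℕ) (j : ℕ) : Prop :=
  if h : j < n then ((P.ord ⟨j, h⟩ : ℕ) < m) else False

instance (P : KOBDD n k w') (m : ℕ) : DecidablePred (relP P m) := fun j => by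
  unfold relP; infer_instance

theorem relP_lt {P : KOBDD n k w'} {m j : ℕ} (h : relP P m j) : j < n := by
  by_contra hc
  rw [relP, dif_neg hc] at h
  exact h

theorem relP_ord {P : KOBDD n k w'} {m j : ℕ} (h : relP P m j) (hj : j < n) :
    (P.ord ⟨j, hj⟩ : ℕ) < m := by
  rw [relP, dif_pos hj] at h
  exact h

theorem relP_intro {P : KOBDD n k w'} {m j : ℕ} (hj : j < n)
    (h : (P.ord ⟨j, hj⟩ : ℕ) < m) : relP P m j := by
  rw [relP, dif_pos hj]; exact h

theorem relP_finite (P : KOBDD n k w') (m : ℕ) : (Set.ofPred (relP P m)).Finite :=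
  Set.Finite.subset (Set.finite_Iio n) (fun _ hj => relP_lt hj)

theorem relP_card (P : KOBDD n k w') {m : ℕ} (hmn : m ≤ n) :
    (relP_finite P m).toFinset.card = m := by
  have h : (relP_finite P m).toFinset.card = (Finset.range m).card := by
    apply Finset.card_nbij (i := fun j => if h : j < n then (P.ord ⟨j, h⟩ : ℕ) else 0)
    · intro a ha
      rw [Finset.mem_coe, Set.Finite.mem_toFinset] at ha
      simp only [dif_pos (relP_lt ha)]
      exact Finset.mem_range.mpr (relP_ord ha _)
    · intro a1 h1 a2 h2 heq
      simp only [Finset.coe_sort_coe, Set.Finite.coe_toFinset, Set.mem_setOf_eq] at h1 h2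
      simp only [dif_pos (relP_lt h1), dif_pos (relP_lt h2)] at heq
      have h3 : (⟨a1, relP_lt h1⟩ : Fin n) = ⟨a2, relP_lt h2⟩ :=
        P.ord.injective (Fin.ext heq)
      exact congrArg Fin.val h3
    · intro i hi
      simp only [Finset.coe_range, Set.mem_Iio] at hi
      refine ⟨((P.ord.symm ⟨i, lt_of_lt_of_le hi hmn⟩ : Fin n) : ℕ), ?_, ?_⟩
      · simp only [Finset.coe_sort_coe, Set.Finite.coe_toFinset, Set.mem_setOf_eq]
        refine relP_intro (Fin.isLt _) ?_
        have h4 : (⟨((P.ord.symm ⟨i, lt_of_lt_of_le hi hmn⟩ : Fin n) : ℕ), Fin.isLt _⟩ : Fin n)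
            = P.ord.symm ⟨i, lt_of_lt_of_le hi hmn⟩ := Fin.ext rfl
        rw [h4, Equiv.apply_symm_apply]
        exact hi
      · simp only [dif_pos (Fin.isLt (P.ord.symm ⟨i, lt_of_lt_of_le hi hmn⟩))]
        have h4 : (⟨((P.ord.symm ⟨i, lt_of_lt_of_le hi hmn⟩ : Fin n) : ℕ), Fin.isLt _⟩ : Fin n)
            = P.ord.symm ⟨i, lt_of_lt_of_le hi hmn⟩ := Fin.ext rfl
        rw [h4, Equiv.apply_symm_apply]
  simpa using h

/-- positions of the relevant slots, in increasing order, capped by `n` -/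
noncomputable def ppos (P : KOBDD n k w') (m : ℕ) (t : ℕ) : ℕ :=
  if t < m then Nat.nth (relP P m) t else n

theorem ppos_rel {P : KOBDD n k w'} {m t : ℕ} (hmn : m ≤ n) (ht : t < m) :
    relP P m (ppos P m t) := by
  rw [ppos, if_pos ht]
  exact Nat.nth_mem_of_lt_card (relP_finite P m) (by rw [relP_card P hmn]; exact ht)

theorem ppos_lt_n {P : KOBDD n k w'} {m t : ℕ} (hmn : m ≤ n) (ht : t < m) :
    ppos P m t < n := relP_lt (ppos_rel hmn ht)

theorem ppos_le_n {P : KOBDD n k w'} {m t : ℕ} (hmn : m ≤ n) : ppos P m t ≤ n := by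
  by_cases ht : t < m
  · exact le_of_lt (ppos_lt_n hmn ht)
  · rw [ppos, if_neg ht]

theorem ppos_mono {P : KOBDD n k w'} {m t1 t2 : ℕ} (hmn : m ≤ n) (h12 : t1 < t2)
    (h2 : t2 ≤ m) (h1 : t1 < m) : ppos P m t1 < ppos P m t2 := by
  rw [ppos, if_pos h1, ppos]
  by_cases ht2 : t2 < m
  · rw [if_pos ht2]
    exact Nat.nth_lt_nth_of_lt_card (relP_finite P m) h12 (by rw [relP_card P hmn]; exact ht2)
  · rw [if_neg ht2]
    have := ppos_lt_n (P := P) hmn h1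
    rw [ppos, if_pos h1] at this
    exact this

theorem ppos_gap {P : KOBDD n k w'} {m t j : ℕ} (hmn : m ≤ n) (ht : t + 1 ≤ m)
    (h1 : ppos P m t < j) (h2 : j < ppos P m (t + 1)) : ¬ relP P m j := by
  classical
  intro hrel
  have hcnt : Nat.count (relP P m) j < m := by
    have := Nat.count_lt_card (relP_finite P m) hrel
    rwa [relP_card P hmn] at this
  have hnth : Nat.nth (relP P m) (Nat.count (relP P m) j) = j := Nat.nth_count hrel
  set t' := Nat.count (relP P m) j with ht'
  have htm : t < m := by omega
  rw [ppos, if_pos htm] at h1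
  have htt' : t < t' := by
    by_contra hc
    push_neg at hc
    have : Nat.nth (relP P m) t' ≤ Nat.nth (relP P m) t :=
      Nat.nth_le_nth_of_lt_card (relP_finite P m) hc (by rw [relP_card P hmn]; exact htm)
    omega
  by_cases h3 : t + 1 < m
  · rw [ppos, if_pos h3] at h2
    have : Nat.nth (relP P m) (t + 1) ≤ Nat.nth (relP P m) t' :=
      Nat.nth_le_nth_of_lt_card (relP_finite P m) (by omega)
        (by rw [relP_card P hmn]; exact hcnt)
    omega
  · omega

theorem ppos_base {P : KOBDD n k w'} {m j : ℕ} (hmn : m ≤ n) (hm0 : 0 < m)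
    (h : j < ppos P m 0) : ¬ relP P m j := by
  classical
  intro hrel
  have hcnt : Nat.count (relP P m) j < m := by
    have := Nat.count_lt_card (relP_finite P m) hrel
    rwa [relP_card P hmn] at this
  have hnth : Nat.nth (relP P m) (Nat.count (relP P m) j) = j := Nat.nth_count hrel
  rw [ppos, if_pos hm0] at h
  have : Nat.nth (relP P m) 0 ≤ Nat.nth (relP P m) (Nat.count (relP P m) j) :=
    Nat.nth_le_nth_of_lt_card (relP_finite P m) (Nat.zero_le _)
      (by rw [relP_card P hmn]; exact hcnt)
  omega

end Recon

end St10
namespace St10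

section Recon2

variable {n k w' : ℕ}

/-- compressed description of a program computing a function depending on `m` variables -/
def DataT (k w' m : ℕ) := (Fin m → Fin m) × (Fin k → Fin w' → Fin w') ×
  (Fin k → Fin m → Fin w' → Bool → Fin w') × (Fin w') × (Fin w' → Bool)

instance (k w' m : ℕ) : Fintype (DataT k w' m) := by unfold DataT; infer_instance

def reconF (k w' m : ℕ) {n : ℕ} (hmn : m ≤ n) (d : DataT k w' m) : (Fin n → Bool) → Bool :=
  fun x => d.2.2.2.2 (segFold (fun lv s => if h : lv < k then
      segFold (fun t s' => if ht : t < m then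
          d.2.2.1 ⟨lv, h⟩ ⟨t, ht⟩ s' (x ⟨(d.1 ⟨t, ht⟩ : ℕ), lt_of_lt_of_le (d.1 ⟨t, ht⟩).isLt hmn⟩)
        else s') 0 m (d.2.1 ⟨lv, h⟩ s)
    else s) 0 k d.2.2.2.1)

theorem recon_covers {m : ℕ} (hmn : m ≤ n) (hm0 : 0 < m) (P : KOBDD n k w')
    (f : (Fin n → Bool) → Bool) (hP : P.computes f) (hdep : DepOn n m f) :
    ∃ d : DataT k w' m, reconF k w' m hmn d = f := by
  classical
  -- components of the data
  set ordf : Fin m → Fin m := fun t =>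
    ⟨(P.ord ⟨ppos P m t, ppos_lt_n hmn t.isLt⟩ : ℕ),
      relP_ord (ppos_rel hmn t.isLt) _⟩ with hordf
  set dead : Fin k → ℕ → Fin w' → Fin w' := fun l j s =>
    if h : j < n then P.δ l ⟨j, h⟩ s false else s with hdead
  set eta : Fin k → Fin w' → Fin w' := fun l s => segFold (dead l) 0 (ppos P m 0) s with heta
  set phi : Fin k → Fin m → Fin w' → Bool → Fin w' := fun l t s b =>
    segFold (dead l) (ppos P m t + 1) (ppos P m ((t : ℕ) + 1) - (ppos P m t + 1))
      (P.δ l ⟨ppos P m t, ppos_lt_n hmn t.isLt⟩ s b) with hphi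
  refine ⟨(ordf, eta, phi, P.start, P.accept), ?_⟩
  funext x
  -- the extension of the restriction of x
  set XX : Fin n → Bool := fun i =>
    if h : (i : ℕ) < m then x ⟨(i : ℕ), lt_of_lt_of_le h hmn⟩ else false with hXX
  have hagree : f XX = f x := by
    apply hdep
    intro j hj
    simp only [hXX]
    rw [dif_pos hj]
  have hfx : f x = P.accept (P.run XX) := by rw [← hagree, hP XX]
  rw [hfx]
  -- it suffices to compute each layer
  have hlayer : ∀ (l : Fin k) (s : Fin w'),
      P.runLayer XX l s = segFold (fun t s' => if ht : t < m then
        phi l ⟨t, ht⟩ s' (x ⟨(ordf ⟨t, ht⟩ : ℕ), lt_of_lt_of_le (ordf ⟨t, ht⟩).isLt hmn⟩)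
      else s') 0 m (eta l s) := by
    intro l s
    rw [runLayer_eq_segFold]
    set stepXX : ℕ → Fin w' → Fin w' := fun j t =>
      if h : j < n then P.δ l ⟨j, h⟩ t (XX (P.ord ⟨j, h⟩)) else t with hstepXX
    have hdeadc : ∀ (a b : ℕ), b ≤ n → (∀ j, a ≤ j → j < b → ¬ relP P m j) →
        ∀ (z : Fin w'), segFold stepXX a (b - a) z = segFold (dead l) a (b - a) z := by
      intro a b hb hgap z
      apply segFold_congr
      intro j hj hj'
      funext t
      have hjb : j < b := by omega
      have hjn : j < n := by omega
      simp only [hstepXX, hdead]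
      rw [dif_pos hjn, dif_pos hjn]
      have hxx : XX (P.ord ⟨j, hjn⟩) = false := by
        simp only [hXX]
        rw [dif_neg]
        intro hcon
        exact hgap j (by omega) hjb (relP_intro hjn hcon)
      rw [hxx]
    have CL : ∀ t, t ≤ m → segFold stepXX 0 (ppos P m t) s =
        segFold (fun t' s' => if ht : t' < m then
          phi l ⟨t', ht⟩ s' (x ⟨(ordf ⟨t', ht⟩ : ℕ), lt_of_lt_of_le (ordf ⟨t', ht⟩).isLt hmn⟩)
        else s') 0 t (eta l s) := by
      intro t
      induction t with
      | zero =>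
          intro _
          rw [segFold_zero]
          have h0 := hdeadc 0 (ppos P m 0) (ppos_le_n hmn) (fun j hj hj' => ppos_base hmn hm0 hj') s
          simpa [heta] using h0
      | succ t ih =>
          intro ht1
          have htm : t < m := by omega
          have ih' := ih (by omega)
          have hlt : ppos P m t < ppos P m (t + 1) := ppos_mono hmn (by omega) ht1 htm
          have hsum : ppos P m (t + 1) = ppos P m t + (1 + (ppos P m (t + 1) - (ppos P m t + 1))) := by
            omega
          rw [hsum, segFold_add, segFold_add, Nat.zero_add, ih']
          rw [segFold_succ_last (len := t), Nat.zero_add]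
          rw [dif_pos htm]
          set Z := segFold (fun t' s' => if ht : t' < m then
            phi l ⟨t', ht⟩ s' (x ⟨(ordf ⟨t', ht⟩ : ℕ), lt_of_lt_of_le (ordf ⟨t', ht⟩).isLt hmn⟩)
          else s') 0 t (eta l s) with hZ
          -- one step at the relevant position
          have hstep1 : segFold stepXX (ppos P m t) 1 Z =
              P.δ l ⟨ppos P m t, ppos_lt_n hmn htm⟩ Z
                (x ⟨(ordf ⟨t, htm⟩ : ℕ), lt_of_lt_of_le (ordf ⟨t, htm⟩).isLt hmn⟩) := by
            rw [segFold_succ, segFold_zero]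
            simp only [hstepXX]
            rw [dif_pos (ppos_lt_n hmn htm)]
            congr 1
            simp only [hXX, hordf]
            rw [dif_pos (relP_ord (ppos_rel hmn htm) _)]
          rw [hstep1]
          have hdead2 := hdeadc (ppos P m t + 1) (ppos P m (t + 1)) (ppos_le_n hmn)
            (fun j hj hj' => ppos_gap hmn ht1 (by omega) hj')
            (P.δ l ⟨ppos P m t, ppos_lt_n hmn htm⟩ Z
              (x ⟨(ordf ⟨t, htm⟩ : ℕ), lt_of_lt_of_le (ordf ⟨t, htm⟩).isLt hmn⟩))
          rw [hdead2]
    have := CL m le_rfl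
    have hppm : ppos P m m = n := by rw [ppos, if_neg (lt_irrefl m)]
    rw [hppm] at this
    exact this
  -- assemble the layers
  unfold reconF
  simp only
  congr 1
  rw [run_eq_segFold]
  apply (segFold_congr _ _).symm
  intro lv _ hlv
  funext s
  by_cases h : lv < k
  · rw [dif_pos h, dif_pos h]
    exact hlayer ⟨lv, h⟩ s
  · rw [dif_neg h, dif_neg h]

end Recon2

end St10
namespace St10

theorem card_Idx (k w : ℕ) :
    Fintype.card (Idx k w) = (Vv w ^ Vv w) ^ (Sv k w * k) := by
  have h : Fintype.card (Idx k w)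
      = Fintype.card (Fin k → Fin (Sv k w) → Fin (Vv w) → Fin (Vv w)) := rfl
  rw [h]
  simp [Fintype.card_fun, ← pow_mul]
  ring

theorem card_DataT (k w' m : ℕ) :
    Fintype.card (DataT k w' m)
      = m ^ m * (w' ^ w') ^ k * (w' ^ (2 * w')) ^ (m * k) * w' * 2 ^ w' := by
  have h : Fintype.card (DataT k w' m) = Fintype.card ((Fin m → Fin m) ×
      (Fin k → Fin w' → Fin w') × (Fin k → Fin m → Fin w' → Bool → Fin w') ×
      (Fin w') × (Fin w' → Bool)) := rfl
  rw [h, Fintype.card_prod, Fintype.card_prod, Fintype.card_prod, Fintype.card_prod]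
  simp [Fintype.card_fun, ← pow_mul]
  ring

/-- if every width-`w` computable function were width-`w'` computable then the family
would inject into the compressed data -/
theorem exists_not_small {n k w w' : ℕ} (hw : 64 ≤ w) (hk : 2 ≤ k)
    (hmn : mmv k w ≤ n)
    (hnum : Fintype.card (DataT k w' (mmv k w)) < Fintype.card (Idx k w)) :
    ∃ f : (Fin n → Bool) → Bool, (∃ P : KOBDD n k w, P.computes f) ∧
      ¬ (∃ P : KOBDD n k w', P.computes f) := by
  classical
  have hw0 : 0 < w := by omega
  by_contra hcon
  push_neg at hcon
  -- every member of the family is computable with width `w'`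
  have hsm : ∀ A : Idx k w, ∃ P : KOBDD n k w', P.computes (famFun n k w hw0 A) :=
    fun A => hcon _ (famFun_mem_big hw0 A)
  have hm0 : 0 < mmv k w := by
    have h1 : mmv k w = 4 * k * w * w := rfl
    have h2 : 1 * 1 * 1 ≤ 4 * k * w * w := by
      apply Nat.mul_le_mul (Nat.mul_le_mul (by omega) (by omega)) (by omega)
    omega
  -- map each family index to a compressed description
  have hdata : ∀ A : Idx k w, ∃ d : DataT k w' (mmv k w),
      reconF k w' (mmv k w) hmn d = famFun n k w hw0 A := by
    intro A
    obtain ⟨P, hP⟩ := hsm A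
    exact recon_covers hmn hm0 P _ hP (famFun_depOn hw0 A)
  choose Φ hΦ using hdata
  have hinj : Function.Injective Φ := by
    intro A B hAB
    apply famFun_inj hw hk hmn hw0
    rw [← hΦ A, ← hΦ B, hAB]
  have := Fintype.card_le_of_injective Φ hinj
  omega

end St10
namespace St10

theorem eights : ∀ j, 6 ≤ j → 8 * j ≤ 2 ^ j := by
  intro j hj
  induction j with
  | zero => omega
  | succ i ih =>
      by_cases h6 : 6 ≤ i
      · have h1 := ih h6
        have h2 : 8 ≤ 2 ^ i := by
          calc (8 : ℕ) ≤ 8 * i := by omega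
          _ ≤ 2 ^ i := h1
        have h3 : 2 ^ (i + 1) = 2 ^ i + 2 ^ i := by ring
        omega
      · have h5 : i = 5 := by omega
        subst h5
        norm_num

theorem clog_w_bound {w : ℕ} (hw : 64 ≤ w) :
    2 * Nat.clog 2 w + 3 ≤ 18 * (w / 16 - 3) := by
  have hd1 := Nat.div_add_mod w 16
  have hd2 : w % 16 < 16 := Nat.mod_lt _ (by omega)
  have hd3 : 4 ≤ w / 16 := by omega
  by_cases hsmall : w ≤ 128
  · have h128 : Nat.clog 2 128 = 7 := by
      rw [show (128 : ℕ) = 2 ^ 7 by norm_num, Nat.clog_pow _ _ (by norm_num)]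
    have hcw : Nat.clog 2 w ≤ 7 := by
      have := Nat.clog_mono_right 2 hsmall
      omega
    omega
  · push_neg at hsmall
    set cw := Nat.clog 2 w with hcwdef
    have hcw8 : 8 ≤ cw := by
      by_contra hc
      push_neg at hc
      have h1 : w ≤ 2 ^ cw := Nat.le_pow_clog (by norm_num) w
      have h2 : (2 : ℕ) ^ cw ≤ 2 ^ 7 := Nat.pow_le_pow_right (by norm_num) (by omega)
      norm_num at h2
      omega
    have hpow : 2 ^ (cw - 1) < w := by
      by_contra hc
      push_neg at hc
      have : cw ≤ cw - 1 := (Nat.clog_le_iff_le_pow (by norm_num)).mpr hc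
      omega
    have h9 : 8 * (cw - 1) < w := lt_of_le_of_lt (eights _ (by omega)) hpow
    omega

theorem numeric_core {k w : ℕ} (hk : 2 ≤ k) (hw : 64 ≤ w) :
    Fintype.card (DataT k (w / 16 - 3) (mmv k w)) < Fintype.card (Idx k w) := by
  rw [card_Idx, card_DataT]
  set a := w / 16 - 3 with hadef
  set V := Vv w with hVdef
  set m := mmv k w with hmdef
  set S := Sv k w with hSdef
  -- basic size facts
  have hd1 := Nat.div_add_mod w 16
  have hd2 : w % 16 < 16 := Nat.mod_lt _ (by omega)
  have hd3 : 4 ≤ w / 16 := by omega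
  have ha1 : 1 ≤ a := by omega
  have h16 : 16 * a + 48 ≤ w := by omega
  have hv1 := Nat.div_add_mod w 2
  have hv2 : w % 2 < 2 := Nat.mod_lt _ (by omega)
  have hV2 : 2 * V ≤ w := by
    have : V = w / 2 := rfl
    omega
  have hV2' : w ≤ 2 * V + 1 := by
    have : V = w / 2 := rfl
    omega
  have hVa : 8 * a + 24 ≤ V := by omega
  have hV32 : 32 ≤ V := by omega
  have hm4 : m = 4 * k * w * w := rfl
  have hmw : w ≤ m := by
    have h1 : 1 * 1 * w ≤ 4 * k * w * w := by
      have := Nat.mul_le_mul (Nat.mul_le_mul (show 1 ≤ 4 * k by omega) (show 1 ≤ w by omega))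
        (le_refl w)
      calc 1 * 1 * w = 1 * w := by ring
      _ ≤ 4 * k * w * w := by
        have h2 : 1 * w ≤ (4 * k * w) * w := Nat.mul_le_mul_right w (by
          have : 1 * 1 ≤ (4 * k) * w := Nat.mul_le_mul (by omega) (by omega)
          omega)
        omega
    omega
  have hm2 : 4 ≤ m := by omega
  have hkV : 2 * (k * V) ≤ k * w := by
    have := Nat.mul_le_mul_left k hV2
    calc 2 * (k * V) = k * (2 * V) := by ring
    _ ≤ k * w := Nat.mul_le_mul_left k hV2
  have hkwm : 4 * (k * w) ≤ m := by
    have h1 : (4 * (k * w)) * 1 ≤ (4 * (k * w)) * w := Nat.mul_le_mul_left _ (by omega)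
    have h2 : (4 * (k * w)) * w = 4 * k * w * w := by ring
    omega
  have hSm : S = m - 2 * (k * V) := rfl
  have hS4 : 3 * m ≤ 4 * S := by omega
  have hS1 : 1 ≤ S := by omega
  -- clog facts
  set L := Nat.clog 2 m with hLdef
  have hck : Nat.clog 2 k ≤ k := by
    have h1 : k ≤ 2 ^ k := le_of_lt (Nat.lt_two_pow_self)
    exact (Nat.clog_le_iff_le_pow (by norm_num)).mpr h1
  have hL : L ≤ Nat.clog 2 k + 2 * Nat.clog 2 w + 2 := by
    apply (Nat.clog_le_iff_le_pow (by norm_num)).mpr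
    have h1 : k ≤ 2 ^ Nat.clog 2 k := Nat.le_pow_clog (by norm_num) k
    have h2 : w ≤ 2 ^ Nat.clog 2 w := Nat.le_pow_clog (by norm_num) w
    have h3 : m = 4 * k * w * w := rfl
    have h4 : 2 ^ (Nat.clog 2 k + 2 * Nat.clog 2 w + 2)
        = 4 * 2 ^ Nat.clog 2 k * 2 ^ Nat.clog 2 w * 2 ^ Nat.clog 2 w := by
      rw [pow_add, pow_add, two_mul, pow_add]
      ring
    rw [h3, h4]
    exact Nat.mul_le_mul (Nat.mul_le_mul (Nat.mul_le_mul (le_refl 4) h1) h2) h2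
  have hcw3 : 2 * Nat.clog 2 w + 3 ≤ 18 * a := clog_w_bound hw
  -- the two exponent inequalities
  have hak : 1 ≤ a * k := Nat.one_le_iff_ne_zero.mpr (by positivity)
  have hp1 : 2 * a ≤ a * k := by
    calc 2 * a = a * 2 := by ring
    _ ≤ a * k := Nat.mul_le_mul_left a hk
  have hp2 : k ≤ a * k := by
    calc k = 1 * k := by ring
    _ ≤ a * k := Nat.mul_le_mul_right k ha1
  have hLk : L + 2 ≤ 17 * (a * k) := by
    have h1 : L + 2 ≤ k + 2 * Nat.clog 2 w + 4 := by omega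
    have h2 : k + 2 * Nat.clog 2 w + 4 ≤ k + 18 * a + 1 := by omega
    have h3 : k + 18 * a + 1 ≤ 17 * (a * k) := by
      have h4 : 9 * (2 * a) ≤ 9 * (a * k) := by omega
      have h5 : 8 * k ≤ 8 * (a * k) := by omega
      omega
    omega
  -- exponent inequality for powers of a
  have hmk1 : 4 * (a * k) ≤ a * (m * k) := by
    have h1 : a * k * 4 ≤ a * k * m := Nat.mul_le_mul_left _ hm2
    calc 4 * (a * k) = a * k * 4 := by ring
    _ ≤ a * k * m := h1
    _ = a * (m * k) := by ring
  have hSmk : 6 * (a * (m * k)) ≤ 8 * (a * (S * k)) := by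
    have h1 : 2 * (a * k) * (3 * m) ≤ 2 * (a * k) * (4 * S) := Nat.mul_le_mul_left _ hS4
    have h2 : 2 * (a * k) * (3 * m) = 6 * (a * (m * k)) := by ring
    have h3 : 2 * (a * k) * (4 * S) = 8 * (a * (S * k)) := by ring
    omega
  have c1 : a * k + 2 * (a * (m * k)) + 1 ≤ (8 * a + 23) * (S * k) := by
    have h1 : a * k + 2 * (a * (m * k)) + 1 ≤ 6 * (a * (m * k)) := by omega
    have h2 : 8 * (a * (S * k)) = (8 * a) * (S * k) := by ring
    have h3 : (8 * a) * (S * k) ≤ (8 * a + 23) * (S * k) := Nat.mul_le_mul_right _ (by omega)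
    omega
  -- exponent inequality for powers of 2
  have c2 : L * m + a < (24 * a + 69) * (S * k) := by
    have h1 : L * m + a + 1 ≤ (L + 2) * m := by
      have : (L + 2) * m = L * m + 2 * m := by ring
      omega
    have h2 : (L + 2) * m ≤ 17 * (a * k) * m := Nat.mul_le_mul_right m hLk
    have h3 : 17 * (a * k) * m ≤ 18 * (a * (m * k)) := by
      have : 17 * (a * k) * m ≤ 18 * (a * k) * m := Nat.mul_le_mul_right m (by omega)
      have he : 18 * (a * k) * m = 18 * (a * (m * k)) := by ring
      omega
    have h4 : 18 * (a * (m * k)) ≤ 24 * (a * (S * k)) := by omega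
    have h5 : 24 * (a * (S * k)) = (24 * a) * (S * k) := by ring
    have h6 : (24 * a) * (S * k) ≤ (24 * a + 69) * (S * k) := Nat.mul_le_mul_right _ (by omega)
    omega
  -- now assemble
  have hLHS : m ^ m * (a ^ a) ^ k * (a ^ (2 * a)) ^ (m * k) * a * 2 ^ a
      ≤ 2 ^ (L * m + a) * a ^ (a * k + 2 * (a * (m * k)) + 1) := by
    have hA : m ^ m ≤ 2 ^ (L * m) := by
      calc m ^ m ≤ (2 ^ L) ^ m := Nat.pow_le_pow_left (Nat.le_pow_clog (by norm_num) m) m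
      _ = 2 ^ (L * m) := by rw [← pow_mul]
    have hB : (a ^ a) ^ k * (a ^ (2 * a)) ^ (m * k) * a
        = a ^ (a * k + 2 * (a * (m * k)) + 1) := by
      rw [← pow_mul, ← pow_mul, ← pow_add, ← pow_succ]
      congr 1
      ring
    calc m ^ m * (a ^ a) ^ k * (a ^ (2 * a)) ^ (m * k) * a * 2 ^ a
        = (m ^ m * 2 ^ a) * ((a ^ a) ^ k * (a ^ (2 * a)) ^ (m * k) * a) := by ring
    _ ≤ (2 ^ (L * m) * 2 ^ a) * ((a ^ a) ^ k * (a ^ (2 * a)) ^ (m * k) * a) := by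
        apply Nat.mul_le_mul_right
        exact Nat.mul_le_mul_right _ hA
    _ = 2 ^ (L * m + a) * a ^ (a * k + 2 * (a * (m * k)) + 1) := by
        rw [hB, pow_add]
        ring
  have hRHS : 2 ^ ((24 * a + 69) * (S * k)) * a ^ ((8 * a + 23) * (S * k))
      ≤ (V ^ V) ^ (S * k) := by
    have hone : (8 * a) ^ (8 * a + 23) ≤ V ^ V := by
      calc (8 * a) ^ (8 * a + 23) ≤ V ^ (8 * a + 23) :=
        Nat.pow_le_pow_left (by omega) _
      _ ≤ V ^ V := Nat.pow_le_pow_right (by omega) (by omega)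
    calc 2 ^ ((24 * a + 69) * (S * k)) * a ^ ((8 * a + 23) * (S * k))
        = ((2 ^ 3) ^ (8 * a + 23)) ^ (S * k) * (a ^ (8 * a + 23)) ^ (S * k) := by
          rw [← pow_mul, ← pow_mul, ← pow_mul]
          congr 2
          ring
    _ = ((8 * a) ^ (8 * a + 23)) ^ (S * k) := by
          rw [← Nat.mul_pow, ← Nat.mul_pow]
          norm_num
    _ ≤ (V ^ V) ^ (S * k) := Nat.pow_le_pow_left hone _
  have hmid : 2 ^ (L * m + a) * a ^ (a * k + 2 * (a * (m * k)) + 1)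
      < 2 ^ ((24 * a + 69) * (S * k)) * a ^ ((8 * a + 23) * (S * k)) := by
    have hx : (2 : ℕ) ^ (L * m + a) < 2 ^ ((24 * a + 69) * (S * k)) :=
      Nat.pow_lt_pow_right (by norm_num) c2
    have hy : a ^ (a * k + 2 * (a * (m * k)) + 1) ≤ a ^ ((8 * a + 23) * (S * k)) :=
      Nat.pow_le_pow_right ha1 c1
    have hz : 0 < a ^ (a * k + 2 * (a * (m * k)) + 1) := Nat.pow_pos (by omega)
    calc 2 ^ (L * m + a) * a ^ (a * k + 2 * (a * (m * k)) + 1)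
        < 2 ^ ((24 * a + 69) * (S * k)) * a ^ (a * k + 2 * (a * (m * k)) + 1) :=
          (Nat.mul_lt_mul_right hz).mpr hx
    _ ≤ 2 ^ ((24 * a + 69) * (S * k)) * a ^ ((8 * a + 23) * (S * k)) :=
          Nat.mul_le_mul_left _ hy
  calc m ^ m * (a ^ a) ^ k * (a ^ (2 * a)) ^ (m * k) * a * 2 ^ a
      ≤ 2 ^ (L * m + a) * a ^ (a * k + 2 * (a * (m * k)) + 1) := hLHS
  _ < 2 ^ ((24 * a + 69) * (S * k)) * a ^ ((8 * a + 23) * (S * k)) := hmid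
  _ ≤ (V ^ V) ^ (S * k) := hRHS

end St10

/-- for `k ≥ 2`, `w ≥ 64` and
`2kw(2w + ⌈log₂ k⌉ + ⌈log₂(2w)⌉) < n`, the class of Boolean functions on `n`
variables computable by `k`-OBDDs of width `⌊w/16⌋ - 3` is strictly contained in
the class computable by `k`-OBDDs of width `w`. -/
theorem stmt10 (n k w : ℕ) (hk : 2 ≤ k) (hw : 64 ≤ w)
    (hsize : 2 * k * w * (2 * w + Nat.clog 2 k + Nat.clog 2 (2 * w)) < n) :
    {f : (Fin n → Bool) → Bool | ∃ P : KOBDD n k (w / 16 - 3), P.computes f}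
      ⊂ {f : (Fin n → Bool) → Bool | ∃ P : KOBDD n k w, P.computes f} := by
  have hle : w / 16 - 3 ≤ w := by
    have := Nat.div_le_self w 16
    omega
  have hmn : St10.mmv k w ≤ n := by
    have h1 : St10.mmv k w = 4 * k * w * w := rfl
    have h2 : 2 * k * w * (2 * w) ≤ 2 * k * w * (2 * w + Nat.clog 2 k + Nat.clog 2 (2 * w)) :=
      Nat.mul_le_mul_left _ (by omega)
    have h3 : 2 * k * w * (2 * w) = 4 * k * w * w := by ring
    omega
  obtain ⟨f, hfb, hfs⟩ := St10.exists_not_small (n := n) (w' := w / 16 - 3) hw hk hmn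
    (St10.numeric_core hk hw)
  rw [Set.ssubset_iff_of_subset (St10.small_subset_big hle)]
  exact ⟨f, hfb, hfs⟩
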